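/- Let x₁,x₂,x₃,x₄ ∈ ℤ³ be the vertices of a Fano tetrahedron with barycentric weights λ₁,...,λ₄ (positive coprime integers with Σλᵢxᵢ = 0). Then gcd(λᵢ,λⱼ) = 1 for all i ≠ j. -/

import Mathlib

/-- The real vector corresponding to a lattice point of `ℤ³`. -/
noncomputable def toR (x : Fin 3 → ℤ) : Fin 3 → ℝ := fun i => (x i : ℝ)

/-- A lattice tetrahedron in `ℤ³` is *Fano* if its vertices are affinely independent
lattice points, and the only lattice point it contains other than its vertices is the
origin, which lies strictly in its interior. -/
def IsFanoTetra (x : Fin 4 → Fin 3 → ℤ) : Prop :=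
  AffineIndependent ℝ (fun i => toR (x i)) ∧
  (0 : Fin 3 → ℝ) ∈ interior (convexHull ℝ (Set.range fun i => toR (x i))) ∧
  ∀ p : Fin 3 → ℤ, toR p ∈ convexHull ℝ (Set.range fun i => toR (x i)) →
    p = 0 ∨ ∃ i, p = x i

lemma fano_key (x : Fin 4 → Fin 3 → ℤ) (hx : IsFanoTetra x)
    (l : Fin 4 → ℤ) (hpos : ∀ i, 0 < l i)
    (hgcd : ∀ m : ℕ, (∀ i, (m : ℤ) ∣ l i) → m = 1)
    (hbary : (∑ i, l i • x i) = 0) :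
    Int.gcd (l 0) (l 1) = 1 := by
  classical
  obtain ⟨haff, hint, hlat⟩ := hx
  set X : Fin 4 → Fin 3 → ℝ := fun i => toR (x i) with hXdef
  have hbary' : ∀ m, l 0 * x 0 m + l 1 * x 1 m + l 2 * x 2 m + l 3 * x 3 m = 0 := by
    intro m
    have := congrFun hbary m
    simpa [Finset.sum_apply, Fin.sum_univ_four] using this
  have hXm : ∀ i m, X i m = (x i m : ℝ) := fun i m => rfl
  -- uniqueness of linear relations
  have funiq : ∀ c : Fin 4 → ℝ, ∑ i, c i • X i = 0 → ∃ t : ℝ, ∀ i, c i = t * l i := by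
    intro c hc
    have hΛ : (0:ℝ) < ∑ i, (l i : ℝ) := by
      apply Finset.sum_pos
      · intro i _; exact_mod_cast hpos i
      · exact Finset.univ_nonempty
    set t : ℝ := (∑ i, c i) / (∑ i, (l i : ℝ)) with ht
    refine ⟨t, ?_⟩
    have hXsum : ∑ i, (l i : ℝ) • X i = 0 := by
      funext m
      have := hbary' m
      have h2 : ((l 0 * x 0 m + l 1 * x 1 m + l 2 * x 2 m + l 3 * x 3 m : ℤ) : ℝ) = 0 := by
        rw [this]; norm_num
      push_cast at h2
      simp only [Finset.sum_apply, Pi.smul_apply, smul_eq_mul, Fin.sum_univ_four,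
        Pi.zero_apply, hXm]
      linarith
    have h1 : ∑ i, (c i - t * l i) = 0 := by
      rw [Finset.sum_sub_distrib, ← Finset.mul_sum]
      rw [ht]
      field_simp
      ring
    have h2 : ∑ i, (c i - t * l i) • X i = 0 := by
      simp only [sub_smul, mul_smul]
      rw [Finset.sum_sub_distrib, hc, ← Finset.smul_sum, hXsum]
      simp
    have := (affineIndependent_iff.mp haff) Finset.univ _ h1 h2
    intro i
    have hi := this i (Finset.mem_univ i)
    linarith [hi]
  have hlne : ∀ i, (l i : ℝ) ≠ 0 := fun i => by
    have := hpos i; positivity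
  have solve : ∀ c : Fin 4 → ℝ, ∑ i, c i • X i = 0 → (c 0 = 0 ∨ c 1 = 0) → ∀ i, c i = 0 := by
    intro c hc h0
    obtain ⟨t, ht⟩ := funiq c hc
    have ht0 : t = 0 := by
      rcases h0 with h | h
      · have := ht 0; rw [h] at this
        exact (mul_eq_zero.mp this.symm).resolve_right (hlne 0)
      · have := ht 1; rw [h] at this
        exact (mul_eq_zero.mp this.symm).resolve_right (hlne 1)
    intro i; rw [ht i, ht0, zero_mul]
  -- set up d, a, b, q
  set d : ℕ := Int.gcd (l 0) (l 1) with hd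
  have hdpos : 0 < d := Int.gcd_pos_iff.mpr (Or.inl (hpos 0).ne')
  set D : ℤ := (d : ℤ) with hDdef
  have hD : 0 < D := by rw [hDdef]; exact_mod_cast hdpos
  have hd0 : D ∣ l 0 := Int.gcd_dvd_left _ _
  have hd1 : D ∣ l 1 := Int.gcd_dvd_right _ _
  set a : ℤ := l 2 % D with ha
  set b : ℤ := l 3 % D with hb
  have ha0 : 0 ≤ a := Int.emod_nonneg _ hD.ne'
  have ha1 : a < D := Int.emod_lt_of_pos _ hD
  have hb0 : 0 ≤ b := Int.emod_nonneg _ hD.ne'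
  have hb1 : b < D := Int.emod_lt_of_pos _ hD
  have ha2 : D ∣ l 2 - a := by
    rw [ha, Int.emod_def]; exact ⟨l 2 / D, by ring⟩
  have hb2 : D ∣ l 3 - b := by
    rw [hb, Int.emod_def]; exact ⟨l 3 / D, by ring⟩
  have hdvd : ∀ m, D ∣ (a * x 2 m + b * x 3 m) := by
    intro m
    have h23 : D ∣ l 2 * x 2 m + l 3 * x 3 m := by
      have he : l 2 * x 2 m + l 3 * x 3 m = -(l 0 * x 0 m) - l 1 * x 1 m := by
        have := hbary' m; linarith
      rw [he]
      exact dvd_sub (dvd_neg.mpr (hd0.mul_right _)) (hd1.mul_right _)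
    have he : a * x 2 m + b * x 3 m =
        (l 2 * x 2 m + l 3 * x 3 m) - ((l 2 - a) * x 2 m + (l 3 - b) * x 3 m) := by ring
    rw [he]
    exact dvd_sub h23 (dvd_add (ha2.mul_right _) (hb2.mul_right _))
  set q : Fin 3 → ℤ := fun m => (a * x 2 m + b * x 3 m) / D with hqdef
  have hDR : (0:ℝ) < (D:ℝ) := by exact_mod_cast hD
  set α : ℝ := (a : ℝ) / (D : ℝ) with hα
  set β : ℝ := (b : ℝ) / (D : ℝ) with hβ
  have hα0 : 0 ≤ α := div_nonneg (by exact_mod_cast ha0) hDR.le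
  have hα1 : α < 1 := (div_lt_one hDR).mpr (by exact_mod_cast ha1)
  have hβ0 : 0 ≤ β := div_nonneg (by exact_mod_cast hb0) hDR.le
  have hβ1 : β < 1 := (div_lt_one hDR).mpr (by exact_mod_cast hb1)
  have hXq : ∀ m, (q m : ℝ) = α * X 2 m + β * X 3 m := by
    intro m
    have h := Int.ediv_mul_cancel (hdvd m)
    have h2 : ((a * x 2 m + b * x 3 m) / D : ℤ) * (D:ℝ) = (a:ℝ) * x 2 m + (b:ℝ) * x 3 m := by
      exact_mod_cast congrArg (fun z : ℤ => (z : ℝ)) h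
    rw [hqdef]
    simp only [hXm]
    rw [hα, hβ]
    field_simp
    linarith [h2]
  -- membership helper
  have h0mem : (0 : Fin 3 → ℝ) ∈ convexHull ℝ (Set.range X) := interior_subset hint
  have hmem : ∀ u v : ℝ, 0 ≤ u → 0 ≤ v → u + v ≤ 1 →
      u • X 2 + v • X 3 ∈ convexHull ℝ (Set.range X) := by
    intro u v hu hv huv
    have h := (convex_convexHull ℝ (Set.range X)).sum_mem
      (t := (Finset.univ : Finset (Fin 3))) (w := ![u, v, 1 - u - v]) (z := ![X 2, X 3, 0])
      (fun i _ => by fin_cases i <;> simp <;> linarith)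
      (by simp [Fin.sum_univ_three])
      (fun i _ => by
        fin_cases i
        · exact subset_convexHull ℝ _ ⟨2, rfl⟩
        · exact subset_convexHull ℝ _ ⟨3, rfl⟩
        · exact h0mem)
    simpa [Fin.sum_univ_three] using h
  -- the finishing extraction per lattice-point case
  by_cases hab : a + b ≤ D
  · -- q itself is in the hull
    have hqmem : toR q ∈ convexHull ℝ (Set.range X) := by
      have he : toR q = α • X 2 + β • X 3 := by
        funext m
        simp only [Pi.add_apply, Pi.smul_apply, smul_eq_mul]
        exact hXq m
      rw [he]
      refine hmem α β hα0 hβ0 ?_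
      rw [hα, hβ, ← add_div, div_le_one hDR]
      exact_mod_cast hab
    rcases hlat q hqmem with h0 | ⟨i, hi⟩
    · -- q = 0 : then α = β = 0 and D divides everything
      have hc : ∑ i, (![(0:ℝ), 0, α, β]) i • X i = 0 := by
        funext m
        have hq0 : (q m : ℝ) = 0 := by rw [congrFun h0 m]; norm_num
        simp only [Finset.sum_apply, Pi.smul_apply, smul_eq_mul, Fin.sum_univ_four,
          Pi.zero_apply, Matrix.cons_val_zero, Matrix.cons_val_one, Matrix.head_cons,
          Matrix.cons_val_two, Matrix.tail_cons, Matrix.cons_val_three]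
        linarith [hXq m, hq0]
      have hall := solve _ hc (Or.inl rfl)
      have hα' : α = 0 := by simpa using hall 2
      have hβ' : β = 0 := by simpa using hall 3
      have haz : a = 0 := by
        rw [hα] at hα'; field_simp at hα'; exact_mod_cast hα'
      have hbz : b = 0 := by
        rw [hβ] at hβ'; field_simp at hβ'; exact_mod_cast hβ'
      have hd2 : D ∣ l 2 := Int.dvd_of_emod_eq_zero (by rw [← ha]; exact haz)
      have hd3 : D ∣ l 3 := Int.dvd_of_emod_eq_zero (by rw [← hb]; exact hbz)
      refine hgcd d ?_
      intro i
      fin_cases i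
      · exact hd0
      · exact hd1
      · exact hd2
      · exact hd3
    · -- q = x i : contradiction in each case
      exfalso
      fin_cases i
      · replace hi : q = x 0 := hi
        have hqx : ∀ m, (q m : ℝ) = X 0 m := fun m => by rw [hXm 0 m, congrFun hi m]
        have hc : ∑ i, (![(-1:ℝ), 0, α, β]) i • X i = 0 := by
          funext m
          simp only [Finset.sum_apply, Pi.smul_apply, smul_eq_mul, Fin.sum_univ_four,
            Pi.zero_apply, Matrix.cons_val_zero, Matrix.cons_val_one, Matrix.head_cons,
            Matrix.cons_val_two, Matrix.tail_cons, Matrix.cons_val_three]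
          linarith [hXq m, hqx m]
        have := solve _ hc (Or.inr rfl)
        simpa using this 0
      · replace hi : q = x 1 := hi
        have hqx : ∀ m, (q m : ℝ) = X 1 m := fun m => by rw [hXm 1 m, congrFun hi m]
        have hc : ∑ i, (![(0:ℝ), -1, α, β]) i • X i = 0 := by
          funext m
          simp only [Finset.sum_apply, Pi.smul_apply, smul_eq_mul, Fin.sum_univ_four,
            Pi.zero_apply, Matrix.cons_val_zero, Matrix.cons_val_one, Matrix.head_cons,
            Matrix.cons_val_two, Matrix.tail_cons, Matrix.cons_val_three]
          linarith [hXq m, hqx m]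
        have := solve _ hc (Or.inl rfl)
        simpa using this 1
      · replace hi : q = x 2 := hi
        have hqx : ∀ m, (q m : ℝ) = X 2 m := fun m => by rw [hXm 2 m, congrFun hi m]
        have hc : ∑ i, (![(0:ℝ), 0, α - 1, β]) i • X i = 0 := by
          funext m
          simp only [Finset.sum_apply, Pi.smul_apply, smul_eq_mul, Fin.sum_univ_four,
            Pi.zero_apply, Matrix.cons_val_zero, Matrix.cons_val_one, Matrix.head_cons,
            Matrix.cons_val_two, Matrix.tail_cons, Matrix.cons_val_three]
          linarith [hXq m, hqx m]
        have := solve _ hc (Or.inl rfl)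
        have := this 2
        simp at this
        linarith
      · replace hi : q = x 3 := hi
        have hqx : ∀ m, (q m : ℝ) = X 3 m := fun m => by rw [hXm 3 m, congrFun hi m]
        have hc : ∑ i, (![(0:ℝ), 0, α, β - 1]) i • X i = 0 := by
          funext m
          simp only [Finset.sum_apply, Pi.smul_apply, smul_eq_mul, Fin.sum_univ_four,
            Pi.zero_apply, Matrix.cons_val_zero, Matrix.cons_val_one, Matrix.head_cons,
            Matrix.cons_val_two, Matrix.tail_cons, Matrix.cons_val_three]
          linarith [hXq m, hqx m]
        have := solve _ hc (Or.inl rfl)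
        have := this 3
        simp at this
        linarith
  · -- a + b > D : use q' = x 2 + x 3 - q
    exfalso
    push_neg at hab
    set q' : Fin 3 → ℤ := fun m => x 2 m + x 3 m - q m with hq'def
    have hXq' : ∀ m, (q' m : ℝ) = (1 - α) * X 2 m + (1 - β) * X 3 m := by
      intro m
      rw [hq'def]
      push_cast
      have := hXq m
      simp only [hXm] at this ⊢
      linarith
    have habR : 1 ≤ α + β := by
      rw [hα, hβ, ← add_div, le_div_iff₀ hDR, one_mul]
      exact_mod_cast hab.le
    have hq'mem : toR q' ∈ convexHull ℝ (Set.range X) := by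
      have he : toR q' = (1 - α) • X 2 + (1 - β) • X 3 := by
        funext m
        simp only [Pi.add_apply, Pi.smul_apply, smul_eq_mul]
        exact hXq' m
      rw [he]
      exact hmem _ _ (by linarith) (by linarith) (by linarith)
    rcases hlat q' hq'mem with h0 | ⟨i, hi⟩
    · have hc : ∑ i, (![(0:ℝ), 0, 1 - α, 1 - β]) i • X i = 0 := by
        funext m
        have hq0 : (q' m : ℝ) = 0 := by rw [congrFun h0 m]; norm_num
        simp only [Finset.sum_apply, Pi.smul_apply, smul_eq_mul, Fin.sum_univ_four,
          Pi.zero_apply, Matrix.cons_val_zero, Matrix.cons_val_one, Matrix.head_cons,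
          Matrix.cons_val_two, Matrix.tail_cons, Matrix.cons_val_three]
        linarith [hXq' m, hq0]
      have := solve _ hc (Or.inl rfl)
      have := this 2
      simp at this
      linarith
    · fin_cases i
      · replace hi : q' = x 0 := hi
        have hqx : ∀ m, (q' m : ℝ) = X 0 m := fun m => by rw [hXm 0 m, congrFun hi m]
        have hc : ∑ i, (![(-1:ℝ), 0, 1 - α, 1 - β]) i • X i = 0 := by
          funext m
          simp only [Finset.sum_apply, Pi.smul_apply, smul_eq_mul, Fin.sum_univ_four,
            Pi.zero_apply, Matrix.cons_val_zero, Matrix.cons_val_one, Matrix.head_cons,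
            Matrix.cons_val_two, Matrix.tail_cons, Matrix.cons_val_three]
          linarith [hXq' m, hqx m]
        have := solve _ hc (Or.inr rfl)
        simpa using this 0
      · replace hi : q' = x 1 := hi
        have hqx : ∀ m, (q' m : ℝ) = X 1 m := fun m => by rw [hXm 1 m, congrFun hi m]
        have hc : ∑ i, (![(0:ℝ), -1, 1 - α, 1 - β]) i • X i = 0 := by
          funext m
          simp only [Finset.sum_apply, Pi.smul_apply, smul_eq_mul, Fin.sum_univ_four,
            Pi.zero_apply, Matrix.cons_val_zero, Matrix.cons_val_one, Matrix.head_cons,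
            Matrix.cons_val_two, Matrix.tail_cons, Matrix.cons_val_three]
          linarith [hXq' m, hqx m]
        have := solve _ hc (Or.inl rfl)
        simpa using this 1
      · replace hi : q' = x 2 := hi
        have hqx : ∀ m, (q' m : ℝ) = X 2 m := fun m => by rw [hXm 2 m, congrFun hi m]
        have hc : ∑ i, (![(0:ℝ), 0, -α, 1 - β]) i • X i = 0 := by
          funext m
          simp only [Finset.sum_apply, Pi.smul_apply, smul_eq_mul, Fin.sum_univ_four,
            Pi.zero_apply, Matrix.cons_val_zero, Matrix.cons_val_one, Matrix.head_cons,
            Matrix.cons_val_two, Matrix.tail_cons, Matrix.cons_val_three]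
          linarith [hXq' m, hqx m]
        have := solve _ hc (Or.inl rfl)
        have := this 3
        simp at this
        linarith
      · replace hi : q' = x 3 := hi
        have hqx : ∀ m, (q' m : ℝ) = X 3 m := fun m => by rw [hXm 3 m, congrFun hi m]
        have hc : ∑ i, (![(0:ℝ), 0, 1 - α, -β]) i • X i = 0 := by
          funext m
          simp only [Finset.sum_apply, Pi.smul_apply, smul_eq_mul, Fin.sum_univ_four,
            Pi.zero_apply, Matrix.cons_val_zero, Matrix.cons_val_one, Matrix.head_cons,
            Matrix.cons_val_two, Matrix.tail_cons, Matrix.cons_val_three]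
          linarith [hXq' m, hqx m]
        have := solve _ hc (Or.inl rfl)
        have := this 2
        simp at this
        linarith

theorem fanoTetra_weights_pairwise_coprime
    (x : Fin 4 → Fin 3 → ℤ) (hx : IsFanoTetra x)
    (l : Fin 4 → ℤ) (hpos : ∀ i, 0 < l i)
    (hgcd : Int.gcd (Int.gcd (Int.gcd (l 0) (l 1)) (l 2)) (l 3) = 1)
    (hbary : (∑ i, l i • x i) = 0) :
    ∀ i j, i ≠ j → Int.gcd (l i) (l j) = 1 := by
  have hgcd' : ∀ m : ℕ, (∀ i, (m : ℤ) ∣ l i) → m = 1 := by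
    intro m hm
    have h1 : (m : ℤ) ∣ (Int.gcd (l 0) (l 1) : ℤ) := Int.dvd_coe_gcd (hm 0) (hm 1)
    have h2 : (m : ℤ) ∣ (Int.gcd (Int.gcd (l 0) (l 1) : ℤ) (l 2) : ℤ) := Int.dvd_coe_gcd h1 (hm 2)
    have h3 : (m : ℤ) ∣ (Int.gcd (Int.gcd (Int.gcd (l 0) (l 1) : ℤ) (l 2) : ℤ) (l 3) : ℤ) :=
      Int.dvd_coe_gcd h2 (hm 3)
    rw [hgcd] at h3
    have : m ∣ 1 := by exact_mod_cast h3
    exact Nat.dvd_one.mp this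
  have K : ∀ σ : Equiv.Perm (Fin 4), Int.gcd (l (σ 0)) (l (σ 1)) = 1 := by
    intro σ
    have hrange : Set.range (fun i => toR ((x ∘ σ) i)) = Set.range (fun i => toR (x i)) :=
      σ.surjective.range_comp (fun i => toR (x i))
    have hx' : IsFanoTetra (x ∘ σ) := by
      obtain ⟨h1, h2, h3⟩ := hx
      refine ⟨h1.comp_embedding σ.toEmbedding, ?_, ?_⟩
      · rw [hrange]; exact h2
      · intro p hp
        rw [hrange] at hp
        rcases h3 p hp with h | ⟨i, hi⟩
        · exact Or.inl h
        · exact Or.inr ⟨σ.symm i, by simpa using hi⟩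
    exact fano_key (x ∘ σ) hx' (l ∘ σ) (fun i => hpos _)
      (fun m hm => hgcd' m (fun i => by simpa using hm (σ.symm i)))
      ((Equiv.sum_comp σ (fun i => l i • x i)).trans hbary)
  have P : ∀ (v : Fin 4 → Fin 4), Function.Bijective v → Int.gcd (l (v 0)) (l (v 1)) = 1 :=
    fun v hv => K (Equiv.ofBijective v hv)
  intro i j hij
  fin_cases i <;> fin_cases j <;>
    first
      | exact absurd rfl hij
      | exact P ![0, 1, 2, 3] (by decide)
      | exact P ![0, 2, 1, 3] (by decide)
      | exact P ![0, 3, 1, 2] (by decide)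
      | exact P ![1, 0, 2, 3] (by decide)
      | exact P ![1, 2, 0, 3] (by decide)
      | exact P ![1, 3, 0, 2] (by decide)
      | exact P ![2, 0, 1, 3] (by decide)
      | exact P ![2, 1, 0, 3] (by decide)
      | exact P ![2, 3, 0, 1] (by decide)
      | exact P ![3, 0, 1, 2] (by decide)
      | exact P ![3, 1, 0, 2] (by decide)
      | exact P ![3, 2, 0, 1] (by decide)
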